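/- There exists a constant C̃₂ > 0 depending only on the reference triangle such that for every triangle T and every u ∈ P₁(T), C̃₂||u||_{L²(T)} ≤ sup over nonzero v ∈ P₁(T) of (∫_T u b_T v dx)/||v||_{L²(T)} ≤ ||u||_{L²(T)}. -/

import Mathlib

open MeasureTheory Set intervalIntegral

namespace Stmt7Aux

/-- The reference triangle. -/
def Tref : Set (ℝ × ℝ) := {q | 0 ≤ q.1 ∧ 0 ≤ q.2 ∧ q.1 + q.2 ≤ 1}

lemma measurableSet_Tref : MeasurableSet Tref := by
  have : Tref = {q : ℝ × ℝ | 0 ≤ q.1} ∩ ({q | 0 ≤ q.2} ∩ {q | q.1 + q.2 ≤ 1}) := by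
    ext q; simp [Tref, and_assoc]
  rw [this]
  exact (measurableSet_le measurable_const measurable_fst).inter
    ((measurableSet_le measurable_const measurable_snd).inter
      (measurableSet_le (measurable_fst.add measurable_snd) measurable_const))

lemma Tref_subset : Tref ⊆ Set.Icc (0,0) ((1:ℝ),(1:ℝ)) := by
  rintro ⟨s, t⟩ ⟨h1, h2, h3⟩
  constructor <;> constructor <;> simp_all <;> linarith

lemma isCompact_Tref : IsCompact Tref := by
  have hclosed : IsClosed Tref := by
    have : Tref = {q : ℝ × ℝ | 0 ≤ q.1} ∩ ({q | 0 ≤ q.2} ∩ {q | q.1 + q.2 ≤ 1}) := by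
      ext q; simp [Tref, and_assoc]
    rw [this]
    exact (isClosed_le continuous_const continuous_fst).inter
      ((isClosed_le continuous_const continuous_snd).inter
        (isClosed_le (continuous_fst.add continuous_snd) continuous_const))
  exact (isCompact_Icc).of_isClosed_subset hclosed Tref_subset

lemma integrableOn_Tref {g : ℝ × ℝ → ℝ} (hg : Continuous g) : IntegrableOn g Tref :=
  (hg.locallyIntegrable).integrableOn_isCompact isCompact_Tref

lemma beta_int (c : ℕ) : ∀ a : ℕ, ∫ s in (0:ℝ)..1, s ^ a * (1 - s) ^ c
    = (Nat.factorial a * Nat.factorial c : ℝ) / Nat.factorial (a + c + 1) := by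
  induction c with
  | zero =>
    intro a
    simp [integral_pow, Nat.factorial_succ]
    field_simp
  | succ c ih =>
    intro a
    have hu : ∀ s ∈ Set.uIcc (0:ℝ) 1, HasDerivAt (fun s : ℝ => (1 - s) ^ (c + 1))
        (-((c+1) * (1 - s) ^ c)) s := by
      intro s _
      have h1 : HasDerivAt (fun s : ℝ => 1 - s) (-1) s := by
        simpa using (hasDerivAt_id' s).const_sub (1:ℝ)
      have := (hasDerivAt_pow (c + 1) (1 - s)).comp s h1
      refine this.congr_deriv ?_
      rw [Nat.add_sub_cancel]; push_cast; ring
    have hv : ∀ s ∈ Set.uIcc (0:ℝ) 1, HasDerivAt (fun s : ℝ => s ^ (a + 1) / (a + 1))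
        (s ^ a) s := by
      intro s _
      have := (hasDerivAt_pow (a + 1) s).div_const (a + 1)
      refine this.congr_deriv ?_
      rw [Nat.add_sub_cancel, Nat.cast_add_one, mul_div_cancel_left₀ _ (by positivity : ((a:ℝ)+1) ≠ 0)]
    have hiu : IntervalIntegrable (fun s : ℝ => -((c+1) * (1 - s) ^ c)) volume 0 1 :=
      (Continuous.intervalIntegrable (by continuity) 0 1)
    have hiv : IntervalIntegrable (fun s : ℝ => s ^ a) volume 0 1 :=
      (Continuous.intervalIntegrable (by continuity) 0 1)
    have key := intervalIntegral.integral_mul_deriv_eq_deriv_mul hu hv hiu hiv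
    have h2 : ∫ s in (0:ℝ)..1, s ^ a * (1 - s) ^ (c+1)
        = ∫ s in (0:ℝ)..1, (1 - s) ^ (c+1) * s ^ a := by
      congr 1; funext s; ring
    rw [h2, key]
    have h3 : ∫ s in (0:ℝ)..1, -((c:ℝ)+1) * (1 - s) ^ c * (s ^ (a+1) / (a+1))
        = (-((c:ℝ)+1)/(a+1)) * ∫ s in (0:ℝ)..1, s ^ (a+1) * (1 - s) ^ c := by
      rw [← intervalIntegral.integral_const_mul]
      congr 1; funext s; ring
    have h4 : (fun s : ℝ => -(((c:ℝ)+1) * (1 - s) ^ c) * (s ^ (a+1) / (a+1)))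
        = fun s : ℝ => -((c:ℝ)+1) * (1 - s) ^ c * (s ^ (a+1) / (a+1)) := by
      funext s; ring
    rw [h4, h3, ih (a + 1)]
    simp only [Nat.factorial_succ]
    have ha : ((a:ℝ)+1) ≠ 0 := by positivity
    have hf1 : (Nat.factorial (a + 1 + c + 1) : ℝ) ≠ 0 := by positivity
    have heq : a + 1 + c + 1 = a + (c+1) + 1 := by ring
    rw [heq] at hf1 ⊢
    push_cast
    field_simp
    ring

lemma mono_int (a b : ℕ) : ∫ q in Tref, q.1 ^ a * q.2 ^ b
    = (Nat.factorial a * Nat.factorial b : ℝ) / Nat.factorial (a + b + 2) := by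
  have hg : Continuous (fun q : ℝ × ℝ => q.1 ^ a * q.2 ^ b) := by continuity
  have hint : Integrable (Tref.indicator (fun q : ℝ × ℝ => q.1 ^ a * q.2 ^ b)) volume :=
    (integrableOn_Tref hg).integrable_indicator measurableSet_Tref
  rw [← MeasureTheory.integral_indicator measurableSet_Tref]
  rw [show (volume : Measure (ℝ × ℝ)) = (volume : Measure ℝ).prod volume from
    Measure.volume_eq_prod ℝ ℝ]
  rw [MeasureTheory.integral_prod _ (by rwa [← Measure.volume_eq_prod])]
  have inner : ∀ x : ℝ, (∫ y : ℝ, Tref.indicator (fun q : ℝ × ℝ => q.1 ^ a * q.2 ^ b) (x, y))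
      = (Set.Icc (0:ℝ) 1).indicator (fun x => x ^ a * (1 - x) ^ (b+1) / (b+1)) x := by
    intro x
    have hfun : (fun y : ℝ => Tref.indicator (fun q : ℝ × ℝ => q.1 ^ a * q.2 ^ b) (x, y))
        = ({y : ℝ | 0 ≤ x ∧ 0 ≤ y ∧ x + y ≤ 1}).indicator (fun y => x ^ a * y ^ b) := by
      funext y
      simp [Set.indicator_apply, Tref]
    rw [hfun]
    by_cases hx0 : 0 ≤ x
    · by_cases hx1 : x ≤ 1
      · have hset : {y : ℝ | 0 ≤ x ∧ 0 ≤ y ∧ x + y ≤ 1} = Set.Icc 0 (1 - x) := by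
          ext y; simp only [Set.mem_setOf_eq, Set.mem_Icc]
          constructor
          · rintro ⟨_, h2, h3⟩; exact ⟨h2, by linarith⟩
          · rintro ⟨h2, h3⟩; exact ⟨hx0, h2, by linarith⟩
        rw [hset, MeasureTheory.integral_indicator measurableSet_Icc,
          MeasureTheory.integral_Icc_eq_integral_Ioc,
          ← intervalIntegral.integral_of_le (by linarith : (0:ℝ) ≤ 1 - x)]
        rw [intervalIntegral.integral_const_mul, integral_pow]
        rw [Set.indicator_of_mem (Set.mem_Icc.2 ⟨hx0, hx1⟩)]
        ring
      · have hset : {y : ℝ | 0 ≤ x ∧ 0 ≤ y ∧ x + y ≤ 1} = (∅ : Set ℝ) := by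
          ext y; simp only [Set.mem_setOf_eq, Set.mem_empty_iff_false, iff_false]
          rintro ⟨_, h2, h3⟩; linarith
        rw [hset]
        simp [Set.indicator_of_notMem
          (by simp [Set.mem_Icc]; intro h; linarith : x ∉ Set.Icc (0:ℝ) 1)]
    · have hset : {y : ℝ | 0 ≤ x ∧ 0 ≤ y ∧ x + y ≤ 1} = (∅ : Set ℝ) := by
        ext y; simp only [Set.mem_setOf_eq, Set.mem_empty_iff_false, iff_false]
        rintro ⟨h1, _, _⟩; exact hx0 h1
      rw [hset]
      simp [Set.indicator_of_notMem
        (by simp [Set.mem_Icc]; intro h; linarith : x ∉ Set.Icc (0:ℝ) 1)]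
  rw [MeasureTheory.integral_congr_ae (Filter.Eventually.of_forall inner)]
  rw [MeasureTheory.integral_indicator measurableSet_Icc,
    MeasureTheory.integral_Icc_eq_integral_Ioc,
    ← intervalIntegral.integral_of_le (by norm_num : (0:ℝ) ≤ 1)]
  have : ∀ s : ℝ, s ^ a * (1 - s) ^ (b+1) / (b+1) = (1/(b+1)) * (s ^ a * (1 - s) ^ (b+1)) := by
    intro s; ring
  simp_rw [this]
  rw [intervalIntegral.integral_const_mul, beta_int (b+1) a]
  have h1 : a + (b + 1) + 1 = a + b + 2 := by ring
  rw [h1, Nat.factorial_succ]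
  have hb : ((b:ℝ)+1) ≠ 0 := by positivity
  push_cast
  field_simp

lemma poly_int (n : ℕ) (coef : Fin n → ℝ) (e1 e2 : Fin n → ℕ) :
    ∫ q in Tref, ∑ i, coef i * (q.1 ^ e1 i * q.2 ^ e2 i)
    = ∑ i, coef i *
        ((Nat.factorial (e1 i) * Nat.factorial (e2 i) : ℝ) / Nat.factorial (e1 i + e2 i + 2)) := by
  rw [MeasureTheory.integral_finset_sum]
  · refine Finset.sum_congr rfl fun i _ => ?_
    rw [MeasureTheory.integral_const_mul, mono_int]
  · intro i _
    exact ((integrableOn_Tref (by continuity)).const_mul (coef i))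

lemma L2a (γ0 γ1 γ2 : ℝ) :
    ∫ q in Tref, (γ0 + γ1 * q.1 + γ2 * q.2) ^ 2
    = γ0^2/2 + γ0*γ1/3 + γ0*γ2/3 + γ1^2/12 + γ1*γ2/12 + γ2^2/12 := by
  have h : (fun q : ℝ × ℝ => (γ0 + γ1 * q.1 + γ2 * q.2) ^ 2)
      = fun q : ℝ × ℝ => ∑ i : Fin 6,
          (![γ0^2, 2*γ0*γ1, 2*γ0*γ2, γ1^2, 2*γ1*γ2, γ2^2] i) *
          (q.1 ^ (![0,1,0,2,1,0] : Fin 6 → ℕ) i * q.2 ^ (![0,0,1,0,1,2] : Fin 6 → ℕ) i) := by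
    funext q
    simp [Fin.sum_univ_succ]
    ring
  rw [h, poly_int]
  simp [Fin.sum_univ_succ]
  norm_num [Nat.factorial]
  ring

lemma L2b (γ0 γ1 γ2 : ℝ) :
    ∫ q in Tref, (γ0 + γ1 * q.1 + γ2 * q.2) ^ 2 * (27 * ((1 - q.1 - q.2) * q.1 * q.2))
    = 9/40*γ0^2 + 3/20*γ0*γ1 + 3/20*γ0*γ2 + 9/280*γ1^2 + 3/70*γ1*γ2 + 9/280*γ2^2 := by
  have h : (fun q : ℝ × ℝ =>
        (γ0 + γ1 * q.1 + γ2 * q.2) ^ 2 * (27 * ((1 - q.1 - q.2) * q.1 * q.2)))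
      = fun q : ℝ × ℝ => ∑ i : Fin 18,
          (![27*γ0^2, 54*γ0*γ1, 54*γ0*γ2, 27*γ1^2, 54*γ1*γ2, 27*γ2^2,
             -27*γ0^2, -54*γ0*γ1, -54*γ0*γ2, -27*γ1^2, -54*γ1*γ2, -27*γ2^2,
             -27*γ0^2, -54*γ0*γ1, -54*γ0*γ2, -27*γ1^2, -54*γ1*γ2, -27*γ2^2] i) *
          (q.1 ^ (![1,2,1,3,2,1, 2,3,2,4,3,2, 1,2,1,3,2,1] : Fin 18 → ℕ) i
           * q.2 ^ (![1,1,2,1,2,3, 1,1,2,1,2,3, 2,2,3,2,3,4] : Fin 18 → ℕ) i) := by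
    funext q
    simp [Fin.sum_univ_succ]
    ring
  rw [h, poly_int]
  simp [Fin.sum_univ_succ]
  norm_num [Nat.factorial]
  ring

lemma key_ineq (γ0 γ1 γ2 : ℝ) :
    (1/4) * (γ0^2/2 + γ0*γ1/3 + γ0*γ2/3 + γ1^2/12 + γ1*γ2/12 + γ2^2/12)
    ≤ 9/40*γ0^2 + 3/20*γ0*γ1 + 3/20*γ0*γ2 + 9/280*γ1^2 + 3/70*γ1*γ2 + 9/280*γ2^2 := by
  nlinarith [sq_nonneg γ0, sq_nonneg (γ0+γ1), sq_nonneg (γ0+γ2), sq_nonneg (3*γ0+γ1+γ2)]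

lemma L2a_pos (γ0 γ1 γ2 : ℝ) (h : ¬(γ0 = 0 ∧ γ1 = 0 ∧ γ2 = 0)) :
    0 < γ0^2/2 + γ0*γ1/3 + γ0*γ2/3 + γ1^2/12 + γ1*γ2/12 + γ2^2/12 := by
  by_contra hle
  push_neg at hle
  have hA : γ0^2 = 0 := by
    nlinarith [sq_nonneg (γ0+γ1), sq_nonneg (γ0+γ2), sq_nonneg (3*γ0+γ1+γ2), sq_nonneg γ0]
  have hB : (γ0+γ1)^2 = 0 := by
    nlinarith [sq_nonneg (γ0+γ1), sq_nonneg (γ0+γ2), sq_nonneg (3*γ0+γ1+γ2), sq_nonneg γ0]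
  have hC : (γ0+γ2)^2 = 0 := by
    nlinarith [sq_nonneg (γ0+γ1), sq_nonneg (γ0+γ2), sq_nonneg (3*γ0+γ1+γ2), sq_nonneg γ0]
  have h0 : γ0 = 0 := by
    have := sq_eq_zero_iff.1 hA; simpa using this
  have h1 : γ1 = 0 := by
    have := sq_eq_zero_iff.1 hB; rw [h0] at this; simpa using this
  have h2 : γ2 = 0 := by
    have := sq_eq_zero_iff.1 hC; rw [h0] at this; simpa using this
  exact h ⟨h0, h1, h2⟩

lemma convex_Tref : Convex ℝ Tref := by
  have h1 : Convex ℝ {q : ℝ × ℝ | 0 ≤ q.1} :=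
    convex_halfSpace_ge (⟨fun x y => rfl, fun c x => rfl⟩ : IsLinearMap ℝ fun q : ℝ × ℝ => q.1) 0
  have h2 : Convex ℝ {q : ℝ × ℝ | 0 ≤ q.2} :=
    convex_halfSpace_ge (⟨fun x y => rfl, fun c x => rfl⟩ : IsLinearMap ℝ fun q : ℝ × ℝ => q.2) 0
  have h3 : Convex ℝ {q : ℝ × ℝ | q.1 + q.2 ≤ 1} :=
    convex_halfSpace_le (⟨fun x y => by simp [add_add_add_comm], fun c x => by simp [mul_add]⟩ :
      IsLinearMap ℝ fun q : ℝ × ℝ => q.1 + q.2) 1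
  have : Tref = {q : ℝ × ℝ | 0 ≤ q.1} ∩ ({q | 0 ≤ q.2} ∩ {q | q.1 + q.2 ≤ 1}) := by
    ext q; simp [Tref, and_assoc]
  rw [this]
  exact h1.inter (h2.inter h3)

lemma Tref_eq_hull :
    Tref = convexHull ℝ {((0:ℝ),(0:ℝ)), ((1:ℝ),(0:ℝ)), ((0:ℝ),(1:ℝ))} := by
  apply le_antisymm
  · intro q hq
    obtain ⟨h1, h2, h3⟩ : 0 ≤ q.1 ∧ 0 ≤ q.2 ∧ q.1 + q.2 ≤ 1 := hq
    have hconv : Convex ℝ (convexHull ℝ {((0:ℝ),(0:ℝ)), ((1:ℝ),(0:ℝ)), ((0:ℝ),(1:ℝ))}) :=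
      convex_convexHull ℝ _
    have := hconv.sum_mem (t := (Finset.univ : Finset (Fin 3)))
      (w := ![1 - q.1 - q.2, q.1, q.2])
      (z := ![((0:ℝ),(0:ℝ)), ((1:ℝ),(0:ℝ)), ((0:ℝ),(1:ℝ))])
      (by intro i _; fin_cases i <;> simp <;> linarith)
      (by simp [Fin.sum_univ_three]; try ring)
      (by intro i _; fin_cases i <;> exact subset_convexHull ℝ _ (by simp))
    convert this using 1
    simp [Fin.sum_univ_three, Prod.ext_iff]
  · apply convexHull_min _ convex_Tref
    intro x hx
    rcases hx with rfl | rfl | rfl <;> constructor <;> norm_num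

lemma cov (p0 : ℝ × ℝ) (a b2 c d : ℝ) (hD : a*d - b2*c ≠ 0) (g : ℝ × ℝ → ℝ) :
    ∫ x in (fun q : ℝ × ℝ => (p0.1 + (a*q.1 + b2*q.2), p0.2 + (c*q.1 + d*q.2))) '' Tref, g x
    = |a*d - b2*c| * ∫ q in Tref, g (p0.1 + (a*q.1 + b2*q.2), p0.2 + (c*q.1 + d*q.2)) := by
  set L : (ℝ × ℝ) →L[ℝ] (ℝ × ℝ) := LinearMap.toContinuousLinearMap
    (Matrix.toLin (Module.Basis.finTwoProd ℝ) (Module.Basis.finTwoProd ℝ) !![a, b2; c, d]) with hL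
  have hLapp : ∀ q : ℝ × ℝ, L q = (a*q.1 + b2*q.2, c*q.1 + d*q.2) := by
    intro q
    simp only [hL, LinearMap.coe_toContinuousLinearMap']
    exact Matrix.toLin_finTwoProd_apply a b2 c d q
  have hfeq : (fun q : ℝ × ℝ => (p0.1 + (a*q.1 + b2*q.2), p0.2 + (c*q.1 + d*q.2)))
      = fun q => p0 + L q := by
    funext q; rw [hLapp]; exact Prod.ext rfl rfl
  have hdet : L.det = a*d - b2*c := by
    rw [hL, ContinuousLinearMap.det, LinearMap.coe_toContinuousLinearMap,
      LinearMap.det_toLin, Matrix.det_fin_two_of]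
  have hderiv : ∀ x ∈ Tref, HasFDerivWithinAt
      (fun q : ℝ × ℝ => (p0.1 + (a*q.1 + b2*q.2), p0.2 + (c*q.1 + d*q.2))) L Tref x := by
    intro x _
    rw [hfeq]
    exact (L.hasFDerivAt.const_add p0).hasFDerivWithinAt
  have hinj : Set.InjOn
      (fun q : ℝ × ℝ => (p0.1 + (a*q.1 + b2*q.2), p0.2 + (c*q.1 + d*q.2))) Tref := by
    intro x _ y _ h
    rw [Prod.ext_iff] at h
    obtain ⟨e1, e2⟩ := h
    simp only at e1 e2
    have h1 : (x.1 - y.1) * (a*d - b2*c) = 0 := by linear_combination d * e1 - b2 * e2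
    have h2 : (x.2 - y.2) * (a*d - b2*c) = 0 := by linear_combination a * e2 - c * e1
    have hx1 : x.1 = y.1 := by
      rcases mul_eq_zero.1 h1 with h | h
      · linarith [sub_eq_zero.1 h]
      · exact absurd h hD
    have hx2 : x.2 = y.2 := by
      rcases mul_eq_zero.1 h2 with h | h
      · linarith [sub_eq_zero.1 h]
      · exact absurd h hD
    exact Prod.ext hx1 hx2
  rw [integral_image_eq_integral_abs_det_fderiv_smul volume measurableSet_Tref hderiv hinj g]
  simp only [hdet, smul_eq_mul]
  rw [MeasureTheory.integral_const_mul]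

lemma memL2 {S : Set (ℝ × ℝ)} (hSm : MeasurableSet S) (hSc : IsCompact S)
    {f : ℝ × ℝ → ℝ} (hf : Continuous f) :
    MemLp (fun x => |f x|) (ENNReal.ofReal 2) (volume.restrict S) := by
  haveI : IsFiniteMeasure (volume.restrict S) :=
    ⟨by rw [Measure.restrict_apply_univ]; exact hSc.measure_lt_top⟩
  obtain ⟨C, hC⟩ : ∃ C, ∀ x ∈ S, ‖|f x|‖ ≤ C := by
    rcases hSc.exists_bound_of_continuousOn hf.continuousOn with ⟨C, hC⟩
    exact ⟨C, fun x hx => by simpa using hC x hx⟩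
  exact MemLp.of_bound (hf.abs.aestronglyMeasurable) C
    ((ae_restrict_iff' hSm).2 (Filter.Eventually.of_forall hC))

lemma cauchy {S : Set (ℝ × ℝ)} (hSm : MeasurableSet S) (hSc : IsCompact S)
    (f g : ℝ × ℝ → ℝ) (hf : Continuous f) (hg : Continuous g) :
    ∫ x in S, |f x| * |g x|
      ≤ Real.sqrt (∫ x in S, (f x)^2) * Real.sqrt (∫ x in S, (g x)^2) := by
  have hconj : Real.HolderConjugate 2 2 := Real.HolderConjugate.two_two
  have key := MeasureTheory.integral_mul_le_Lp_mul_Lq_of_nonneg (μ := volume.restrict S) hconj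
    (f := fun x => |f x|) (g := fun x => |g x|)
    (Filter.Eventually.of_forall fun x => abs_nonneg _)
    (Filter.Eventually.of_forall fun x => abs_nonneg _)
    (memL2 hSm hSc hf) (memL2 hSm hSc hg)
  have h1 : ∀ (h : ℝ × ℝ → ℝ), (∫ x in S, |h x| ^ (2:ℝ)) = ∫ x in S, (h x)^2 := by
    intro h
    refine integral_congr_ae (Filter.Eventually.of_forall fun x => ?_)
    simp only [Real.rpow_two, sq_abs]
  have h2 : ∀ (h : ℝ × ℝ → ℝ), (∫ x in S, (h x)^2) ^ (1/(2:ℝ))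
      = Real.sqrt (∫ x in S, (h x)^2) := by
    intro h
    rw [Real.sqrt_eq_rpow]
  rw [h1, h1] at key
  rw [h2, h2] at key
  exact key

end Stmt7Aux

open Stmt7Aux

set_option maxHeartbeats 1000000

/-- There is C̃₂ > 0 depending only on the reference triangle such that
for every triangle T (convex hull of affinely independent points, with barycentric
coordinates lam) and every affine u ∈ P₁(T),
C̃₂‖u‖_{L²(T)} ≤ sup_{0 ≠ v ∈ P₁(T)} (∫_T u b_T v dx)/‖v‖_{L²(T)} ≤ ‖u‖_{L²(T)}. -/
theorem stmt_7 :
    ∃ C : ℝ, 0 < C ∧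
      ∀ (p : Fin 3 → ℝ × ℝ), AffineIndependent ℝ p →
      ∀ (lam : Fin 3 → ((ℝ × ℝ) →ᵃ[ℝ] ℝ)),
        (∀ i j, lam i (p j) = if i = j then 1 else 0) →
        (∀ x : ℝ × ℝ, (∑ i, lam i x) = 1) →
      ∀ u : ℝ × ℝ → ℝ, (∃ a b c : ℝ, ∀ x : ℝ × ℝ, u x = a * x.1 + b * x.2 + c) →
        C * Real.sqrt (∫ x in convexHull ℝ (Set.range p), (u x) ^ 2)
            ≤ sSup {r : ℝ | ∃ v : ℝ × ℝ → ℝ,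
                (∃ a b c : ℝ, ∀ x : ℝ × ℝ, v x = a * x.1 + b * x.2 + c) ∧
                (∃ x ∈ convexHull ℝ (Set.range p), v x ≠ 0) ∧
                r = (∫ x in convexHull ℝ (Set.range p),
                      u x * (27 * (lam 0 x * lam 1 x * lam 2 x)) * v x)
                    / Real.sqrt (∫ x in convexHull ℝ (Set.range p), (v x) ^ 2)}
          ∧ sSup {r : ℝ | ∃ v : ℝ × ℝ → ℝ,
                (∃ a b c : ℝ, ∀ x : ℝ × ℝ, v x = a * x.1 + b * x.2 + c) ∧
                (∃ x ∈ convexHull ℝ (Set.range p), v x ≠ 0) ∧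
                r = (∫ x in convexHull ℝ (Set.range p),
                      u x * (27 * (lam 0 x * lam 1 x * lam 2 x)) * v x)
                    / Real.sqrt (∫ x in convexHull ℝ (Set.range p), (v x) ^ 2)}
            ≤ Real.sqrt (∫ x in convexHull ℝ (Set.range p), (u x) ^ 2) := by
  refine ⟨1/4, by norm_num, ?_⟩
  intro p hp lam hlam hsum u huex
  obtain ⟨au, bu, cu, hu⟩ := huex
  set S := convexHull ℝ (Set.range p) with hSdef
  have hrange : Set.range p = {p 0, p 1, p 2} := by
    ext x
    constructor
    · rintro ⟨i, rfl⟩; fin_cases i <;> simp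
    · rintro (rfl | rfl | rfl) <;> exact ⟨_, rfl⟩
  have hSc : IsCompact S := by
    rw [hSdef, hrange]
    exact (Set.toFinite _).isCompact_convexHull ℝ
  have hSm : MeasurableSet S := hSc.isClosed.measurableSet
  set a := (p 1).1 - (p 0).1 with ha
  set c := (p 1).2 - (p 0).2 with hc
  set b2 := (p 2).1 - (p 0).1 with hb2
  set d := (p 2).2 - (p 0).2 with hd
  -- linear independence of edge vectors
  have hindep : ∀ α β : ℝ, α * a + β * b2 = 0 → α * c + β * d = 0 → α = 0 ∧ β = 0 := by
    intro α β h1 h2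
    rw [ha, hb2] at h1
    rw [hc, hd] at h2
    have key := affineIndependent_iff.1 hp Finset.univ ![-(α+β), α, β]
      (by simp [Fin.sum_univ_three]; try ring)
      (by
        rw [Fin.sum_univ_three]
        simp only [Matrix.cons_val_zero, Matrix.cons_val_one, Matrix.head_cons,
          Matrix.cons_val_two, Matrix.tail_cons]
        apply Prod.ext
        · simp only [Prod.fst_add, Prod.smul_fst, smul_eq_mul, Prod.fst_zero]
          linear_combination h1
        · simp only [Prod.snd_add, Prod.smul_snd, smul_eq_mul, Prod.snd_zero]
          linear_combination h2)
    constructor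
    · have := key 1 (Finset.mem_univ _)
      simpa only [Matrix.cons_val_one, Matrix.head_cons, Matrix.cons_val_zero] using this
    · have := key 2 (Finset.mem_univ _)
      simpa only [Matrix.cons_val_two, Matrix.tail_cons, Matrix.head_cons] using this
  have hD : a * d - b2 * c ≠ 0 := by
    intro hDeq
    by_cases hac : a = 0 ∧ c = 0
    · obtain ⟨h1, _⟩ := hindep 1 0 (by simp [hac.1]) (by simp [hac.2])
      exact one_ne_zero h1
    · by_cases ha0 : a = 0
      · have hc0 : c ≠ 0 := fun h => hac ⟨ha0, h⟩
        obtain ⟨_, h2⟩ := hindep (-d) c (by linear_combination -hDeq) (by ring)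
        exact hc0 h2
      · obtain ⟨_, h2⟩ := hindep (-b2) a (by ring) (by linear_combination hDeq)
        exact ha0 h2
  have habs : 0 < |a * d - b2 * c| := abs_pos.2 hD
  -- the affine parametrization of S by the reference triangle
  have himage :
      (fun q : ℝ × ℝ => ((p 0).1 + (a*q.1 + b2*q.2), (p 0).2 + (c*q.1 + d*q.2))) '' Tref
        = S := by
    set L0 : (ℝ × ℝ) →ₗ[ℝ] (ℝ × ℝ) :=
      Matrix.toLin (Module.Basis.finTwoProd ℝ) (Module.Basis.finTwoProd ℝ) !![a, b2; c, d] with hL0def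
    have hL0 : ∀ q : ℝ × ℝ, L0 q = (a*q.1 + b2*q.2, c*q.1 + d*q.2) :=
      Matrix.toLin_finTwoProd_apply a b2 c d
    set F : (ℝ × ℝ) →ᵃ[ℝ] (ℝ × ℝ) := AffineMap.mk'
      (fun q : ℝ × ℝ => ((p 0).1 + (a*q.1 + b2*q.2), (p 0).2 + (c*q.1 + d*q.2))) L0 0
      (by
        intro q
        rw [show q -ᵥ (0 : ℝ × ℝ) = q from by simp, hL0]
        apply Prod.ext <;> simp [Prod.ext_iff] <;> ring) with hF
    have hFcoe : ⇑F = fun q : ℝ × ℝ =>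
        ((p 0).1 + (a*q.1 + b2*q.2), (p 0).2 + (c*q.1 + d*q.2)) := rfl
    rw [← hFcoe, Tref_eq_hull, AffineMap.image_convexHull]
    rw [Set.image_insert_eq, Set.image_insert_eq, Set.image_singleton]
    have e0 : F ((0:ℝ),(0:ℝ)) = p 0 := by
      rw [hFcoe]; apply Prod.ext <;> simp
    have e1 : F ((1:ℝ),(0:ℝ)) = p 1 := by
      rw [hFcoe]; apply Prod.ext <;> simp [ha, hc]
    have e2 : F ((0:ℝ),(1:ℝ)) = p 2 := by
      rw [hFcoe]; apply Prod.ext <;> simp [hb2, hd]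
    rw [e0, e1, e2, hSdef, hrange]
  -- barycentric coordinates composed with parametrization
  have hbar : ∀ (i : Fin 3) (q : ℝ × ℝ),
      lam i ((p 0).1 + (a*q.1 + b2*q.2), (p 0).2 + (c*q.1 + d*q.2))
        = q.1 * (lam i (p 1) - lam i (p 0)) + q.2 * (lam i (p 2) - lam i (p 0))
          + lam i (p 0) := by
    intro i q
    have hfq : ((p 0).1 + (a*q.1 + b2*q.2), (p 0).2 + (c*q.1 + d*q.2))
        = (q.1 • (p 1 - p 0) + q.2 • (p 2 - p 0)) +ᵥ p 0 := by
      have hv : (q.1 • (p 1 - p 0) + q.2 • (p 2 - p 0)) +ᵥ p 0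
          = (q.1 * ((p 1).1 - (p 0).1) + q.2 * ((p 2).1 - (p 0).1) + (p 0).1,
             q.1 * ((p 1).2 - (p 0).2) + q.2 * ((p 2).2 - (p 0).2) + (p 0).2) := rfl
      rw [hv]
      apply Prod.ext <;> simp only [ha, hc, hb2, hd] <;> ring
    rw [hfq, AffineMap.map_vadd]
    rw [map_add, _root_.map_smul, _root_.map_smul]
    rw [show p 1 - p 0 = p 1 -ᵥ p 0 from rfl, show p 2 - p 0 = p 2 -ᵥ p 0 from rfl,
      AffineMap.linearMap_vsub, AffineMap.linearMap_vsub]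
    simp only [vsub_eq_sub, vadd_eq_add, smul_eq_mul]
    try ring
  have hbar0 : ∀ q : ℝ × ℝ,
      lam 0 ((p 0).1 + (a*q.1 + b2*q.2), (p 0).2 + (c*q.1 + d*q.2)) = 1 - q.1 - q.2 := by
    intro q
    rw [hbar 0 q]
    simp [hlam]
    try ring
  have hbar1 : ∀ q : ℝ × ℝ,
      lam 1 ((p 0).1 + (a*q.1 + b2*q.2), (p 0).2 + (c*q.1 + d*q.2)) = q.1 := by
    intro q
    rw [hbar 1 q]
    simp [hlam]
    try ring
  have hbar2 : ∀ q : ℝ × ℝ,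
      lam 2 ((p 0).1 + (a*q.1 + b2*q.2), (p 0).2 + (c*q.1 + d*q.2)) = q.2 := by
    intro q
    rw [hbar 2 q]
    simp [hlam]
    try ring
  -- bounds on the bubble function over S
  have hlam_nonneg : ∀ (i : Fin 3), ∀ x ∈ S, 0 ≤ lam i x := by
    intro i
    have hsub : S ⊆ (lam i) ⁻¹' (Set.Ici 0) := by
      rw [hSdef]
      apply convexHull_min _ ((convex_Ici (0:ℝ)).affine_preimage (lam i))
      rintro x ⟨j, rfl⟩
      simp only [Set.mem_preimage, Set.mem_Ici, hlam i j]
      split <;> norm_num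
    intro x hx
    exact hsub hx
  have hb_bound : ∀ x ∈ S, 0 ≤ 27 * (lam 0 x * lam 1 x * lam 2 x) ∧
      27 * (lam 0 x * lam 1 x * lam 2 x) ≤ 1 := by
    intro x hx
    have h0 := hlam_nonneg 0 x hx
    have h1 := hlam_nonneg 1 x hx
    have h2 := hlam_nonneg 2 x hx
    have hs := hsum x
    rw [Fin.sum_univ_three] at hs
    constructor
    · positivity
    · nlinarith [sq_nonneg (lam 0 x - lam 1 x), sq_nonneg (lam 1 x - lam 2 x),
        sq_nonneg (lam 0 x - lam 2 x), mul_nonneg h0 h1, mul_nonneg h1 h2, mul_nonneg h0 h2]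
  -- continuity
  have huc : Continuous u := by
    have : u = fun x : ℝ × ℝ => au * x.1 + bu * x.2 + cu := funext hu
    rw [this]
    exact ((continuous_const.mul continuous_fst).add
      (continuous_const.mul continuous_snd)).add continuous_const
  have hlamc : ∀ i : Fin 3, Continuous (lam i) := fun i =>
    (lam i).continuous_of_finiteDimensional
  -- pullback of quadratic integrals
  have hpullA : ∀ (w : ℝ × ℝ → ℝ) (aw bw cw : ℝ), (∀ x, w x = aw * x.1 + bw * x.2 + cw) →
      ∫ x in S, (w x)^2 = |a*d - b2*c| *
        (((aw*(p 0).1 + bw*(p 0).2 + cw))^2/2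
          + (aw*(p 0).1 + bw*(p 0).2 + cw)*(aw*a + bw*c)/3
          + (aw*(p 0).1 + bw*(p 0).2 + cw)*(aw*b2 + bw*d)/3
          + (aw*a + bw*c)^2/12 + (aw*a + bw*c)*(aw*b2 + bw*d)/12
          + (aw*b2 + bw*d)^2/12) := by
    intro w aw bw cw hw
    rw [← himage, cov (p 0) a b2 c d hD (fun x => (w x)^2)]
    congr 1
    rw [← L2a (aw*(p 0).1 + bw*(p 0).2 + cw) (aw*a + bw*c) (aw*b2 + bw*d)]
    apply MeasureTheory.setIntegral_congr_fun measurableSet_Tref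
    intro q _
    simp only [hw]
    ring
  -- positivity of the L² norm of a nonzero affine function
  have hpos : ∀ (w : ℝ × ℝ → ℝ) (aw bw cw : ℝ), (∀ x, w x = aw * x.1 + bw * x.2 + cw) →
      (∃ x ∈ S, w x ≠ 0) → 0 < ∫ x in S, (w x)^2 := by
    rintro w aw bw cw hw ⟨x₀, hx₀S, hx₀⟩
    rw [hpullA w aw bw cw hw]
    apply mul_pos habs
    apply L2a_pos
    rintro ⟨h0, h1, h2⟩
    rw [← himage] at hx₀S
    obtain ⟨q, _, hfq⟩ := hx₀S
    apply hx₀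
    rw [← hfq, hw]
    simp only
    linear_combination h0 + q.1 * h1 + q.2 * h2
  set Ku := Real.sqrt (∫ x in S, (u x)^2) with hKu
  -- every element of the sup set is at most Ku
  have hbdd : ∀ r ∈ {r : ℝ | ∃ v : ℝ × ℝ → ℝ,
      (∃ a b c : ℝ, ∀ x : ℝ × ℝ, v x = a * x.1 + b * x.2 + c) ∧
      (∃ x ∈ S, v x ≠ 0) ∧
      r = (∫ x in S, u x * (27 * (lam 0 x * lam 1 x * lam 2 x)) * v x)
          / Real.sqrt (∫ x in S, (v x) ^ 2)}, r ≤ Ku := by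
    rintro r ⟨v, ⟨av, bv, cv, hv⟩, ⟨x₀, hx₀S, hx₀⟩, rfl⟩
    have hvc : Continuous v := by
      have : v = fun x : ℝ × ℝ => av * x.1 + bv * x.2 + cv := funext hv
      rw [this]
      exact ((continuous_const.mul continuous_fst).add
        (continuous_const.mul continuous_snd)).add continuous_const
    have hNv : 0 < ∫ x in S, (v x)^2 := hpos v av bv cv hv ⟨x₀, hx₀S, hx₀⟩
    have hsv : 0 < Real.sqrt (∫ x in S, (v x)^2) := Real.sqrt_pos.2 hNv
    rw [div_le_iff₀ hsv]
    have hBc : Continuous (fun x : ℝ × ℝ => u x * (27 * (lam 0 x * lam 1 x * lam 2 x)) * v x) := by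
      exact (huc.mul (continuous_const.mul (((hlamc 0).mul (hlamc 1)).mul (hlamc 2)))).mul hvc
    have hint1 : IntegrableOn (fun x : ℝ × ℝ => u x * (27 * (lam 0 x * lam 1 x * lam 2 x)) * v x)
        S := (hBc.locallyIntegrable).integrableOn_isCompact hSc
    have hint2 : IntegrableOn (fun x : ℝ × ℝ => |u x| * |v x|) S :=
      ((huc.abs.mul hvc.abs).locallyIntegrable).integrableOn_isCompact hSc
    calc ∫ x in S, u x * (27 * (lam 0 x * lam 1 x * lam 2 x)) * v x
        ≤ ∫ x in S, |u x| * |v x| := by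
          apply MeasureTheory.setIntegral_mono_on hint1 hint2 hSm
          intro x hx
          obtain ⟨hb0, hb1⟩ := hb_bound x hx
          calc u x * (27 * (lam 0 x * lam 1 x * lam 2 x)) * v x
              ≤ |u x * (27 * (lam 0 x * lam 1 x * lam 2 x)) * v x| := le_abs_self _
            _ = |u x| * |27 * (lam 0 x * lam 1 x * lam 2 x)| * |v x| := by
                rw [abs_mul, abs_mul]
            _ ≤ |u x| * 1 * |v x| := by
                apply mul_le_mul_of_nonneg_right _ (abs_nonneg _)
                apply mul_le_mul_of_nonneg_left _ (abs_nonneg _)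
                rw [abs_of_nonneg hb0]
                exact hb1
            _ = |u x| * |v x| := by ring
      _ ≤ Ku * Real.sqrt (∫ x in S, (v x)^2) := cauchy hSm hSc u v huc hvc
  constructor
  · -- lower bound
    by_cases hex : ∃ x ∈ S, u x ≠ 0
    · have hNu : 0 < ∫ x in S, (u x)^2 := hpos u au bu cu hu hex
      have hsu : 0 < Ku := Real.sqrt_pos.2 hNu
      have hmem : (∫ x in S, u x * (27 * (lam 0 x * lam 1 x * lam 2 x)) * u x) / Ku
          ∈ {r : ℝ | ∃ v : ℝ × ℝ → ℝ,
            (∃ a b c : ℝ, ∀ x : ℝ × ℝ, v x = a * x.1 + b * x.2 + c) ∧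
            (∃ x ∈ S, v x ≠ 0) ∧
            r = (∫ x in S, u x * (27 * (lam 0 x * lam 1 x * lam 2 x)) * v x)
                / Real.sqrt (∫ x in S, (v x) ^ 2)} := ⟨u, ⟨au, bu, cu, hu⟩, hex, rfl⟩
      refine le_trans ?_ (le_csSup ⟨Ku, fun r hr => hbdd r hr⟩ hmem)
      rw [le_div_iff₀ hsu]
      -- the numerator via pullback
      have hnum : ∫ x in S, u x * (27 * (lam 0 x * lam 1 x * lam 2 x)) * u x
          = |a*d - b2*c| *
            (9/40*(au*(p 0).1 + bu*(p 0).2 + cu)^2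
              + 3/20*(au*(p 0).1 + bu*(p 0).2 + cu)*(au*a + bu*c)
              + 3/20*(au*(p 0).1 + bu*(p 0).2 + cu)*(au*b2 + bu*d)
              + 9/280*(au*a + bu*c)^2
              + 3/70*(au*a + bu*c)*(au*b2 + bu*d)
              + 9/280*(au*b2 + bu*d)^2) := by
        rw [← himage, cov (p 0) a b2 c d hD
          (fun x => u x * (27 * (lam 0 x * lam 1 x * lam 2 x)) * u x)]
        congr 1
        rw [← L2b (au*(p 0).1 + bu*(p 0).2 + cu) (au*a + bu*c) (au*b2 + bu*d)]
        apply MeasureTheory.setIntegral_congr_fun measurableSet_Tref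
        intro q _
        simp only
        rw [hbar0 q, hbar1 q, hbar2 q]
        simp only [hu]
        ring
      have hden : ∫ x in S, (u x)^2 = |a*d - b2*c| *
          (((au*(p 0).1 + bu*(p 0).2 + cu))^2/2
            + (au*(p 0).1 + bu*(p 0).2 + cu)*(au*a + bu*c)/3
            + (au*(p 0).1 + bu*(p 0).2 + cu)*(au*b2 + bu*d)/3
            + (au*a + bu*c)^2/12 + (au*a + bu*c)*(au*b2 + bu*d)/12
            + (au*b2 + bu*d)^2/12) := hpullA u au bu cu hu
      have hKu2 : Ku * Ku = ∫ x in S, (u x)^2 := Real.mul_self_sqrt (le_of_lt hNu)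
      have hkey := key_ineq (au*(p 0).1 + bu*(p 0).2 + cu) (au*a + bu*c) (au*b2 + bu*d)
      calc 1/4 * Ku * Ku = 1/4 * (∫ x in S, (u x)^2) := by
            rw [mul_assoc, hKu2]
        _ ≤ ∫ x in S, u x * (27 * (lam 0 x * lam 1 x * lam 2 x)) * u x := by
            rw [hnum, hden]
            rw [← mul_assoc, mul_comm (1/4 : ℝ) (|a*d - b2*c|), mul_assoc]
            exact mul_le_mul_of_nonneg_left hkey (abs_nonneg _)
    · push_neg at hex
      have hNu0 : ∫ x in S, (u x)^2 = 0 := by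
        rw [MeasureTheory.setIntegral_congr_fun hSm
          (fun x hx => by simp [hex x hx] : Set.EqOn (fun x => (u x)^2) (fun _ => 0) S)]
        simp
      rw [hKu, hNu0, Real.sqrt_zero, mul_zero]
      have hmem0 : (0:ℝ) ∈ {r : ℝ | ∃ v : ℝ × ℝ → ℝ,
          (∃ a b c : ℝ, ∀ x : ℝ × ℝ, v x = a * x.1 + b * x.2 + c) ∧
          (∃ x ∈ S, v x ≠ 0) ∧
          r = (∫ x in S, u x * (27 * (lam 0 x * lam 1 x * lam 2 x)) * v x)
              / Real.sqrt (∫ x in S, (v x) ^ 2)} := by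
        refine ⟨fun _ => 1, ⟨0, 0, 1, fun x => by norm_num⟩,
          ⟨p 0, subset_convexHull ℝ _ ⟨0, rfl⟩, one_ne_zero⟩, ?_⟩
        have : ∫ x in S, u x * (27 * (lam 0 x * lam 1 x * lam 2 x)) * (1:ℝ) = 0 := by
          rw [MeasureTheory.setIntegral_congr_fun hSm
            (fun x hx => by simp [hex x hx] :
              Set.EqOn (fun x => u x * (27 * (lam 0 x * lam 1 x * lam 2 x)) * (1:ℝ))
                (fun _ => 0) S)]
          simp
        rw [this, zero_div]
      exact le_csSup ⟨Ku, fun r hr => hbdd r hr⟩ hmem0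
  · exact Real.sSup_le hbdd (Real.sqrt_nonneg _)
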